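/- Let V be a finite set and let a, b : V → ℝ_{≥0} be weight functions with Σ_{w∈V} a(w) ≥ 0.99 and Σ_{w∈V} b(w) ≥ 0.99, and suppose a(w) + b(w) ≤ 1 for every w ∈ V. Then there exists a partition V = V_a ⊎ V_b such that Σ_{w∈V_a} a(w) ≥ 0.33 and Σ_{w∈V_b} b(w) ≥ 0.33. -/

import Mathlib

lemma greedy_prefix {V : Type*} [DecidableEq V] (a b : V → ℝ) :
    ∀ (n : ℕ) (S : Finset V), S.card = n → (∀ w ∈ S, 0 < a w) →
    0.33 ≤ ∑ w ∈ S, a w →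
    ∃ P ⊆ S, ∃ ℓ ∈ P, 0.33 ≤ ∑ w ∈ P, a w ∧ ∑ w ∈ P.erase ℓ, a w < 0.33 ∧
      (∀ w ∈ P, b w / a w ≤ b ℓ / a ℓ) ∧
      (∀ u ∈ S, u ∉ P → b ℓ / a ℓ ≤ b u / a u) := by
  intro n
  induction n using Nat.strong_induction_on with
  | _ n IH =>
    intro S hcard hpos hsum
    have hne : S.Nonempty := by
      rcases S.eq_empty_or_nonempty with h | h
      · exfalso; rw [h] at hsum; simp at hsum; norm_num at hsum
      · exact h
    obtain ⟨m, hmS, hmax⟩ := S.exists_max_image (fun w => b w / a w) hne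
    by_cases hrec : 0.33 ≤ ∑ w ∈ S.erase m, a w
    · have hlt : (S.erase m).card < n := by
        rw [← hcard]; exact Finset.card_erase_lt_of_mem hmS
      obtain ⟨P, hPS, ℓ, hℓP, h1, h2, h3, h4⟩ :=
        IH _ hlt (S.erase m) rfl (fun w hw => hpos w (Finset.mem_of_mem_erase hw)) hrec
      refine ⟨P, hPS.trans (Finset.erase_subset _ _), ℓ, hℓP, h1, h2, h3, ?_⟩
      intro u huS huP
      by_cases hum : u = m
      · subst hum
        exact hmax ℓ ((hPS.trans (Finset.erase_subset _ _)) hℓP)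
      · exact h4 u (Finset.mem_erase.mpr ⟨hum, huS⟩) huP
    · push_neg at hrec
      refine ⟨S, le_refl _, m, hmS, hsum, hrec, fun w hw => hmax w hw, fun u hu hu' => absurd hu hu'⟩

/-- Partition step: if `a, b : V → ℝ_{≥0}` with `Σ a ≥ 0.99`, `Σ b ≥ 0.99` and
`a(w) + b(w) ≤ 1` for every `w`, then `V` can be partitioned into `V_a ⊎ V_b` with
`Σ_{w∈V_a} a(w) ≥ 0.33` and `Σ_{w∈V_b} b(w) ≥ 0.33`. -/
theorem exists_partition_loads
    {V : Type*} [Fintype V] [DecidableEq V]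
    (a b : V → ℝ) (ha : ∀ w, 0 ≤ a w) (hb : ∀ w, 0 ≤ b w)
    (hsa : ∑ w, a w ≥ 0.99) (hsb : ∑ w, b w ≥ 0.99)
    (hab : ∀ w, a w + b w ≤ 1) :
    ∃ Va : Finset V, (∑ w ∈ Va, a w ≥ 0.33) ∧ (∑ w ∈ Vaᶜ, b w ≥ 0.33) := by
  by_cases h1 : ∃ w, 0.33 ≤ a w ∧ b w ≤ 0.66
  · obtain ⟨w, hw1, hw2⟩ := h1
    refine ⟨{w}, by simpa using hw1, ?_⟩
    have hc : ∑ u ∈ ({w} : Finset V)ᶜ, b u = (∑ u, b u) - b w := by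
      have := Finset.sum_compl_add_sum ({w} : Finset V) b
      simp at this
      linarith
    rw [hc]; linarith
  · push_neg at h1
    set S : Finset V := Finset.univ.filter (fun w => 0 < a w) with hSdef
    have hSsum : ∑ w ∈ S, a w = ∑ w, a w := by
      rw [hSdef]
      apply Finset.sum_filter_of_ne
      intro w _ hw
      exact lt_of_le_of_ne (ha w) (Ne.symm hw)
    obtain ⟨P, hPS, ℓ, hℓP, hsum1, hsum2, hle, hge⟩ :=
      greedy_prefix a b S.card S rfl
        (fun w hw => (Finset.mem_filter.mp hw).2) (by rw [hSsum]; linarith)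
    have haℓ : 0 < a ℓ := (Finset.mem_filter.mp (hPS hℓP)).2
    set r : ℝ := b ℓ / a ℓ with hrdef
    have hr0 : 0 ≤ r := div_nonneg (hb ℓ) haℓ.le
    have hrℓ : b ℓ = r * a ℓ := by rw [hrdef, div_mul_cancel₀ _ haℓ.ne']
    set t : ℝ := ∑ w ∈ P, a w with htdef
    have ht1 : 0.33 ≤ t := hsum1
    have ht2 : t < 0.33 + a ℓ := by
      have := Finset.sum_erase_add P a hℓP
      rw [htdef]; linarith
    -- sum of b over P is at most r * t
    have hbP : ∑ w ∈ P, b w ≤ r * t := by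
      rw [htdef, Finset.mul_sum]
      apply Finset.sum_le_sum
      intro w hw
      have hwa : 0 < a w := (Finset.mem_filter.mp (hPS hw)).2
      have := hle w hw
      rw [div_le_div_iff₀ hwa haℓ] at this
      rw [hrdef, div_mul_eq_mul_div, le_div_iff₀ haℓ]
      linarith
    -- sum of b over complement at least r * (a-sum over complement)
    have hbC1 : ∑ w ∈ Pᶜ, b w ≥ r * ∑ w ∈ Pᶜ, a w := by
      rw [Finset.mul_sum]
      apply Finset.sum_le_sum
      intro u hu
      have huP : u ∉ P := by simpa using hu
      by_cases hua : 0 < a u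
      · have huS : u ∈ S := Finset.mem_filter.mpr ⟨Finset.mem_univ u, hua⟩
        have := hge u huS huP
        rw [div_le_div_iff₀ haℓ hua] at this
        rw [hrdef, div_mul_eq_mul_div, div_le_iff₀ haℓ]
        linarith
      · have : a u = 0 := le_antisymm (not_lt.mp hua) (ha u)
        rw [this]; simpa using hb u
    have hAc : ∑ w ∈ Pᶜ, a w = (∑ w, a w) - t := by
      have := Finset.sum_compl_add_sum P a
      linarith
    have hBc : ∑ w ∈ Pᶜ, b w = (∑ w, b w) - ∑ w ∈ P, b w := by
      have := Finset.sum_compl_add_sum P b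
      linarith
    refine ⟨P, hsum1, ?_⟩
    -- complement bound I: ≥ 0.99 - r * t ; bound II: ≥ r * (0.99 - t)
    have hI : ∑ w ∈ Pᶜ, b w ≥ 0.99 - r * t := by rw [hBc]; linarith
    have hII : ∑ w ∈ Pᶜ, b w ≥ r * (0.99 - t) := by
      rw [hAc] at hbC1
      nlinarith
    by_cases hcase : a ℓ ≤ 0.33
    · -- t < 0.66
      have ht3 : t < 0.66 := by linarith
      rcases le_or_gt r 1 with hr1 | hr1
      · nlinarith
      · nlinarith
    · push_neg at hcase
      have hbig : 0.66 < b ℓ := h1 ℓ hcase.le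
      have haℓ2 : a ℓ < 0.34 := by have := hab ℓ; linarith
      have ht3 : t < 0.67 := by linarith
      -- r > 0.66/0.34, Bᶜ ≥ r*(0.99 - t) ≥ r*0.32 > 0.33
      nlinarith [mul_pos haℓ (sub_pos.mpr ht3)]
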